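/- Let E be a nonzero finite-dimensional complex inner product space, T : E → E a self-adjoint linear map, ε a real number, and C > 0 a real number. Let μ be an eigenvalue of T with 1 − C(μ − ε)² > 0, and let ρ ≥ 0 be a real number such that |1 − C(ν − ε)²| ≤ ρ for every eigenvalue ν of T with ν ≠ μ. Let P denote the orthogonal projection of E onto the eigenspace ker(T − μ·id). Then for every ψ ∈ E and every natural number n, ‖(1 − C(μ − ε)²)^{−n} • (id − C·(T − ε·id)²)^n ψ − P ψ‖ ≤ (ρ/(1 − C(μ − ε)²))^n · ‖ψ‖. -/

import Mathlib

open Filter Module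

local notation "⟪" x ", " y "⟫" => @inner ℂ _ _ x y

theorem folded_spectrum_rate
    {E : Type*} [NormedAddCommGroup E] [InnerProductSpace ℂ E]
    [FiniteDimensional ℂ E] [Nontrivial E]
    (T : Module.End ℂ E) (hT : LinearMap.IsSymmetric T)
    (ε C : ℝ) (hC : 0 < C)
    (μ : ℝ) (hμ : Module.End.HasEigenvalue T (μ : ℂ))
    (hpos : 0 < 1 - C * (μ - ε) ^ 2)
    (ρ : ℝ) (hρ : 0 ≤ ρ)
    (hbound : ∀ ν : ℝ, Module.End.HasEigenvalue T (ν : ℂ) → ν ≠ μ →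
      |1 - C * (ν - ε) ^ 2| ≤ ρ)
    (ψ : E) (n : ℕ) :
    ‖((1 - C * (μ - ε) ^ 2) ^ n)⁻¹ •
          ((((1 - (C : ℂ) • (T - (ε : ℂ) • 1) ^ 2 : Module.End ℂ E)) ^ n) ψ) -
        ((Submodule.orthogonalProjectionOnto (Module.End.eigenspace T (μ : ℂ)) ψ : E))‖ ≤
      (ρ / (1 - C * (μ - ε) ^ 2)) ^ n * ‖ψ‖ := by
  classical
  set δ : ℝ := 1 - C * (μ - ε) ^ 2 with hδdef
  have hδ0 : δ ≠ 0 := ne_of_gt hpos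
  have hn : Module.finrank ℂ E = Module.finrank ℂ E := rfl
  set b := hT.eigenvectorBasis hn with hb
  set lam := hT.eigenvalues hn with hlam
  set c : Fin (Module.finrank ℂ E) → ℂ := fun i => ⟪b i, ψ⟫ with hc
  set H : Module.End ℂ E := 1 - (C : ℂ) • (T - (ε : ℂ) • 1) ^ 2 with hH
  set r : Fin (Module.finrank ℂ E) → ℝ := fun i => 1 - C * (lam i - ε) ^ 2 with hr
  -- each basis vector is an eigenvector of H with eigenvalue r i
  set A : Module.End ℂ E := T - (ε : ℂ) • 1 with hA
  have hvec : ∀ i, Module.End.HasEigenvector H ((r i : ℂ)) (b i) := by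
    intro i
    have hb0 : b i ≠ 0 := (hT.hasEigenvector_eigenvectorBasis hn i).2
    refine Module.End.hasEigenvector_iff.mpr ⟨?_, hb0⟩
    rw [Module.End.mem_eigenspace_iff]
    have hTbi : T (b i) = (lam i : ℂ) • b i := hT.apply_eigenvectorBasis hn i
    have h1 : A (b i) = ((lam i - ε : ℝ) : ℂ) • b i := by
      rw [hA, LinearMap.sub_apply, LinearMap.smul_apply, Module.End.one_apply, hTbi]
      push_cast
      rw [sub_smul]
    have h2 : (A * A) (b i) = (((lam i - ε) ^ 2 : ℝ) : ℂ) • b i := by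
      rw [Module.End.mul_apply, h1, map_smul, h1, smul_smul]
      push_cast; ring_nf
    have hscal : ((r i : ℝ) : ℂ) = 1 - (C : ℂ) * (((lam i - ε) ^ 2 : ℝ) : ℂ) := by
      rw [hr]; push_cast; ring
    rw [hH, hscal, LinearMap.sub_apply, Module.End.one_apply, LinearMap.smul_apply,
      pow_two, h2, smul_smul, sub_smul, one_smul]
  -- decomposition of ψ
  have hψ : ψ = ∑ i, c i • b i := (b.sum_repr' ψ).symm
  -- action of H^n
  have hHn : (H ^ n) ψ = ∑ i, ((r i : ℂ) ^ n * c i) • b i := by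
    conv_lhs => rw [hψ]
    rw [map_sum]
    refine Finset.sum_congr rfl fun i _ => ?_
    rw [map_smul, (hvec i).pow_apply n, smul_smul, mul_comm]
  -- action of the projection
  set P := Submodule.orthogonalProjectionOnto (Module.End.eigenspace T (μ : ℂ)) with hP
  have hPψ : (P ψ : E) = ∑ i, (if lam i = μ then c i else 0) • b i := by
    conv_lhs => rw [hψ]
    rw [map_sum, Submodule.coe_sum]
    refine Finset.sum_congr rfl fun i _ => ?_
    rw [map_smul]
    by_cases hi : lam i = μ
    · have hmem : b i ∈ Module.End.eigenspace T (μ : ℂ) := by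
        rw [Module.End.mem_eigenspace_iff]
        have hTbi : T (b i) = (lam i : ℂ) • b i := hT.apply_eigenvectorBasis hn i
        rw [hTbi, hi]
      rw [if_pos hi]
      have : (P (b i) : E) = b i := by
        rw [hP]; exact Submodule.starProjection_eq_self_iff.mpr hmem
      simp [this]
    · have hne : (μ : ℂ) ≠ (lam i : ℂ) := by
        intro h; exact hi (Complex.ofReal_injective h.symm)
      have hmem : b i ∈ (Module.End.eigenspace T (μ : ℂ))ᗮ := by
        rw [Submodule.mem_orthogonal]
        intro u hu
        exact hT.orthogonalFamily_eigenspaces hne ⟨u, hu⟩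
          ⟨b i, (hT.hasEigenvector_eigenvectorBasis hn i).1⟩
      have : P (b i) = 0 := by
        rw [hP]
        exact Submodule.orthogonalProjectionOnto_apply_of_mem_orthogonal hmem
      rw [if_neg hi, this]
      simp
  -- coefficients of the difference
  set a : Fin (Module.finrank ℂ E) → ℂ :=
    fun i => (((δ ^ n)⁻¹ : ℝ) : ℂ) * (r i : ℂ) ^ n * c i - (if lam i = μ then c i else 0)
    with ha
  have hvecid : ((δ ^ n)⁻¹ : ℝ) • ((H ^ n) ψ) - (P ψ : E) = ∑ i, a i • b i := by
    rw [hHn, hPψ, Finset.smul_sum, ← Finset.sum_sub_distrib]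
    refine Finset.sum_congr rfl fun i _ => ?_
    rw [← Complex.coe_smul, smul_smul, ← sub_smul, ha]
    ring_nf
  -- norms of sums in an orthonormal basis
  have key : ∀ f : Fin (Module.finrank ℂ E) → ℂ,
      ‖∑ i, f i • b i‖ ^ 2 = ∑ i, ‖f i‖ ^ 2 := by
    intro f
    have h1 : ⟪∑ i, f i • b i, ∑ i, f i • b i⟫ = ∑ i, (starRingEnd ℂ) (f i) * f i :=
      b.orthonormal.inner_sum f f Finset.univ
    have h2 := inner_self_eq_norm_sq (𝕜 := ℂ) (∑ i, f i • b i)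
    rw [← h2, h1, map_sum]
    refine Finset.sum_congr rfl fun i _ => ?_
    rw [RCLike.conj_mul]
    simp [← Complex.ofReal_pow]
  -- per-coefficient bound
  have hcoef : ∀ i, ‖a i‖ ≤ (ρ / δ) ^ n * ‖c i‖ := by
    intro i
    by_cases hi : lam i = μ
    · have hri : r i = δ := by rw [hr]; simp [hi, hδdef]
      have hone : (((δ ^ n)⁻¹ : ℝ) : ℂ) * ((δ : ℝ) : ℂ) ^ n = 1 := by
        have hδc : ((δ : ℝ) : ℂ) ≠ 0 := by exact_mod_cast hδ0
        push_cast
        field_simp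
      have : a i = 0 := by
        simp only [ha]
        rw [hri, if_pos hi, hone, one_mul, sub_self]
      rw [this, norm_zero]
      positivity
    · have hev : Module.End.HasEigenvalue T ((lam i : ℝ) : ℂ) :=
        hT.hasEigenvalue_eigenvalues hn i
      have hrb : |r i| ≤ ρ := hbound (lam i) hev hi
      have : a i = (((δ ^ n)⁻¹ : ℝ) : ℂ) * (r i : ℂ) ^ n * c i := by
        simp only [ha]
        rw [if_neg hi, sub_zero]
      rw [this]
      rw [norm_mul, norm_mul]
      have h1 : ‖(((δ ^ n)⁻¹ : ℝ) : ℂ)‖ = (δ ^ n)⁻¹ := by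
        rw [Complex.norm_real, Real.norm_eq_abs, abs_of_nonneg]
        positivity
      have h2 : ‖(r i : ℂ) ^ n‖ = |r i| ^ n := by
        rw [norm_pow, Complex.norm_real, Real.norm_eq_abs]
      rw [h1, h2]
      have h3 : |r i| ^ n ≤ ρ ^ n := pow_le_pow_left₀ (abs_nonneg _) hrb n
      have h4 : (δ ^ n)⁻¹ * |r i| ^ n ≤ (δ ^ n)⁻¹ * ρ ^ n := by
        apply mul_le_mul_of_nonneg_left h3
        positivity
      calc (δ ^ n)⁻¹ * |r i| ^ n * ‖c i‖ ≤ (δ ^ n)⁻¹ * ρ ^ n * ‖c i‖ :=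
            mul_le_mul_of_nonneg_right h4 (norm_nonneg _)
        _ = (ρ / δ) ^ n * ‖c i‖ := by rw [div_pow]; ring
  -- put it together
  have hψnorm : ‖ψ‖ ^ 2 = ∑ i, ‖c i‖ ^ 2 := by
    conv_lhs => rw [hψ]
    exact key c
  have hsq : ‖∑ i, a i • b i‖ ^ 2 ≤ ((ρ / δ) ^ n * ‖ψ‖) ^ 2 := by
    rw [key a]
    have : ∑ i, ‖a i‖ ^ 2 ≤ ∑ i, ((ρ / δ) ^ n * ‖c i‖) ^ 2 := by
      refine Finset.sum_le_sum fun i _ => ?_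
      exact pow_le_pow_left₀ (norm_nonneg _) (hcoef i) 2
    refine this.trans (le_of_eq ?_)
    simp only [mul_pow]
    rw [← Finset.mul_sum, ← hψnorm]
  have hRHS : 0 ≤ (ρ / δ) ^ n * ‖ψ‖ := by positivity
  have := (pow_le_pow_iff_left₀ (norm_nonneg _) hRHS (two_ne_zero)).mp hsq
  calc ‖((δ ^ n)⁻¹ : ℝ) • ((H ^ n) ψ) - (P ψ : E)‖
      = ‖∑ i, a i • b i‖ := by rw [hvecid]
    _ ≤ (ρ / δ) ^ n * ‖ψ‖ := this
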